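/- Let Λ be a finite nonempty zero/one-weighted graph in which every vertex has degree at least 2 (a loop at a vertex contributes 2 to its degree). Suppose that Λ_0 is a forest and that every edge of weight 1 has its two endpoints in distinct connected components of Λ_0. Then Λ_0 has at least two connected components; in particular χ(Λ_0) ≥ 2, where χ denotes the Euler characteristic (number of vertices minus number of edges). (This is the link-level fact showing that, in a complex with no free vertices or edges satisfying the coloring test conditions, every vertex has curvature 2 − χ(lk_0(v)) ≤ 0.) -/

import Mathlib

/-- A combinatorial graph (Serre style): edges come with a fixed-point-free
reversal involution; loops and multiple edges are allowed. -/
structure SGraph where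
  V : Type
  E : Type
  init : E → V
  bar : E → E
  bar_bar : ∀ e, bar (bar e) = e
  bar_ne : ∀ e, bar e ≠ e

namespace SGraph

variable (G : SGraph)

/-- Terminal vertex of an edge. -/
def term (e : G.E) : G.V := G.init (G.bar e)

/-- Consecutive edges of the list match up. -/
def IsChain (l : List G.E) : Prop :=
  List.Chain' (fun e f => G.term e = G.init f) l

/-- A cycle: a nonempty closed edge path. -/
def IsCycle (l : List G.E) : Prop :=
  l ≠ [] ∧ G.IsChain l ∧
    ∀ e f, l.head? = some e → l.getLast? = some f → G.term f = G.init e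

/-- A reduced cycle: no edge is followed (cyclically) by its reverse. -/
def IsReducedCycle (l : List G.E) : Prop :=
  G.IsCycle l ∧ List.Chain' (fun e f => f ≠ G.bar e) l ∧
    ∀ e f, l.head? = some e → l.getLast? = some f → e ≠ G.bar f

/-- A graph is a forest if it contains no reduced cycle. -/
def IsForestGraph : Prop := ∀ l, ¬ G.IsReducedCycle l

/-- A subgraph: a set of vertices and a set of edges, closed under reversal,
with endpoints among the chosen vertices. -/
structure Subgraph (G : SGraph) where
  verts : Set G.V
  edges : Set G.E
  bar_mem : ∀ ⦃e⦄, e ∈ edges → G.bar e ∈ edges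
  init_mem : ∀ ⦃e⦄, e ∈ edges → G.init e ∈ verts

variable {G}

namespace Subgraph

/-- Subgraph containment. -/
def le (H K : Subgraph G) : Prop := H.verts ⊆ K.verts ∧ H.edges ⊆ K.edges

/-- Intersection of two subgraphs. -/
def inter (H K : Subgraph G) : Subgraph G where
  verts := H.verts ∩ K.verts
  edges := H.edges ∩ K.edges
  bar_mem := fun _ he => ⟨H.bar_mem he.1, K.bar_mem he.2⟩
  init_mem := fun _ he => ⟨H.init_mem he.1, K.init_mem he.2⟩

/-- All edges of the list lie in the subgraph. -/
def EdgesIn (H : Subgraph G) (l : List G.E) : Prop := ∀ e ∈ l, e ∈ H.edges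

/-- A reduced cycle contained in the subgraph. -/
def IsReducedCycleIn (H : Subgraph G) (l : List G.E) : Prop :=
  G.IsReducedCycle l ∧ H.EdgesIn l

/-- A subgraph is a forest if it contains no reduced cycle. -/
def IsForest (H : Subgraph G) : Prop := ∀ l, ¬ H.IsReducedCycleIn l

/-- Reachability inside a subgraph by edge paths. -/
inductive Reaches (H : Subgraph G) : G.V → G.V → Prop
  | refl (v : G.V) (hv : v ∈ H.verts) : Reaches H v v
  | step (e : G.E) (he : e ∈ H.edges) {q : G.V} (h : Reaches H (G.term e) q) :
      Reaches H (G.init e) q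

/-- A subgraph is connected if it is nonempty and any two of its vertices are
joined by an edge path in it. -/
def Connected (H : Subgraph G) : Prop :=
  H.verts.Nonempty ∧ ∀ p ∈ H.verts, ∀ q ∈ H.verts, H.Reaches p q

/-- A tree is a connected forest. -/
def IsTree (H : Subgraph G) : Prop := H.IsForest ∧ H.Connected

/-- `C` is a connected component of `H`: its vertices form a reachability class
of `H` and its edges are the induced ones. -/
def IsCompOf (C H : Subgraph G) : Prop :=
  ∃ v ∈ H.verts, C.verts = {w | H.Reaches v w} ∧
    C.edges = {e | e ∈ H.edges ∧ G.init e ∈ C.verts}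

/-- `H` is a forest relative to `H'`: every reduced cycle of `H` is contained
in `H'`. -/
def ForestRel (H H' : Subgraph G) : Prop :=
  ∀ l, H.IsReducedCycleIn l → H'.EdgesIn l

/-- `H` is a strong forest relative to `H'`: a relative forest such that each
component of `H` meets `H'` in an empty or connected subgraph. -/
def StrongForestRel (H H' : Subgraph G) : Prop :=
  H.ForestRel H' ∧
    ∀ C : Subgraph G, C.IsCompOf H → (C.inter H').verts = ∅ ∨ (C.inter H').Connected

/-- Euler characteristic: number of vertices minus number of (geometric)
edges; each geometric edge corresponds to a pair `{e, ē}`. -/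
noncomputable def eulerChar (H : Subgraph G) : ℤ :=
  (H.verts.ncard : ℤ) - ((H.edges.ncard / 2 : ℕ) : ℤ)

/-- A walk in `H` from `p` to `q`, given as its list of traversed edges. -/
def IsWalk (H : Subgraph G) (p q : G.V) (l : List G.E) : Prop :=
  H.EdgesIn l ∧ G.IsChain l ∧
    (∀ e, l.head? = some e → G.init e = p) ∧
    (∀ e, l.getLast? = some e → G.term e = q) ∧
    (l = [] → p = q ∧ p ∈ H.verts)

/-- The weight-0 subgraph of a zero/one-weighted subgraph: all of its vertices
together with its edges of weight 0. -/
def zeroSub (H : Subgraph G) (ω : G.E → ℕ) (hbar : ∀ e, ω (G.bar e) = ω e) :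
    Subgraph G where
  verts := H.verts
  edges := {e | e ∈ H.edges ∧ ω e = 0}
  bar_mem := fun e he => ⟨H.bar_mem he.1, by rw [hbar]; exact he.2⟩
  init_mem := fun _ he => H.init_mem he.1

end Subgraph

/-- The full subgraph of a graph. -/
def full (G : SGraph) : Subgraph G where
  verts := Set.univ
  edges := Set.univ
  bar_mem := fun _ _ => Set.mem_univ _
  init_mem := fun _ _ => Set.mem_univ _

open Classical in
/-- The quotient graph `G/H'` obtained by identifying the subgraph `H'` to a
single vertex `∗` (represented by `none`): its vertices are the vertices of
`G` not in `H'` together with `∗`; its edges are the edges of `G` not in `H'`,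
with endpoints in `H'` replaced by `∗`. -/
noncomputable def quot (G : SGraph) (H' : Subgraph G) : SGraph where
  V := Option {v : G.V // v ∉ H'.verts}
  E := {e : G.E // e ∉ H'.edges}
  init e := if h : G.init e.1 ∈ H'.verts then none else some ⟨G.init e.1, h⟩
  bar e := ⟨G.bar e.1, fun hc => e.2 (by simpa [G.bar_bar] using H'.bar_mem hc)⟩
  bar_bar e := Subtype.ext (G.bar_bar e.1)
  bar_ne e := fun hc => G.bar_ne e.1 (congrArg Subtype.val hc)

end SGraph


section Aux

namespace SGraph

variable {G : SGraph}

lemma term_bar (e : G.E) : G.term (G.bar e) = G.init e := by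
  simp [SGraph.term, G.bar_bar]

namespace Subgraph

lemma term_mem {H : Subgraph G} {e : G.E} (he : e ∈ H.edges) : G.term e ∈ H.verts :=
  H.init_mem (H.bar_mem he)

lemma Reaches.snoc {H : Subgraph G} {p q : G.V} (h : H.Reaches p q) {e : G.E}
    (he : e ∈ H.edges) (hq : G.init e = q) : H.Reaches p (G.term e) := by
  induction h with
  | refl v hv => exact hq ▸ Reaches.step e he (Reaches.refl _ (term_mem he))
  | step f hf h ih => exact Reaches.step f hf (ih hq)

lemma Reaches.symm {H : Subgraph G} {p q : G.V} (h : H.Reaches p q) : H.Reaches q p := by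
  induction h with
  | refl v hv => exact Reaches.refl v hv
  | step e he h ih => exact term_bar e ▸ ih.snoc (H.bar_mem he) rfl

lemma Reaches.trans {H : Subgraph G} {p q r : G.V} (h : H.Reaches p q) :
    H.Reaches q r → H.Reaches p r := by
  induction h with
  | refl v hv => exact id
  | step e he h ih => exact fun h' => Reaches.step e he (ih h')

lemma Reaches.mono {H K : Subgraph G} (hv : H.verts ⊆ K.verts) (he : H.edges ⊆ K.edges)
    {p q : G.V} (h : H.Reaches p q) : K.Reaches p q := by
  induction h with
  | refl v hv' => exact Reaches.refl v (hv hv')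
  | step e he' h ih => exact Reaches.step e (he he') ih

/-- A reduced walk in a subgraph. -/
def RWalk (H : Subgraph G) (l : List G.E) : Prop :=
  H.EdgesIn l ∧ G.IsChain l ∧ List.Chain' (fun e f => f ≠ G.bar e) l

lemma RWalk.nodup {H : Subgraph G} {l : List G.E} (h : H.RWalk l) (hf : H.IsForest) :
    l.Nodup := by
  by_contra hnd
  obtain ⟨x, hx⟩ := List.exists_duplicate_iff_not_nodup.2 hnd
  rw [List.duplicate_iff_sublist, List.cons_sublist_iff] at hx
  obtain ⟨r₁, r₂, hl, hx1, hx2⟩ := hx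
  have hx2' : x ∈ r₂ := List.singleton_sublist.1 hx2
  obtain ⟨a, b, rfl⟩ := List.append_of_mem hx1
  obtain ⟨c, d, rfl⟩ := List.append_of_mem hx2'
  have hmem : ∀ y ∈ x :: (b ++ c), y ∈ l := by
    intro y hy
    rw [hl]
    rcases List.mem_cons.1 hy with rfl | hy'
    · simp
    · rcases List.mem_append.1 hy' with h' | h' <;> simp [h']
  have hinf : (x :: (b ++ c) ++ [x]) <:+: l := by
    refine ⟨a, d, ?_⟩
    rw [hl]; simp
  have hcl : List.Chain' (fun e f => G.term e = G.init f) l := h.2.1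
  have hrl : List.Chain' (fun e f => f ≠ G.bar e) l := h.2.2
  have hcw := hcl.infix hinf
  have hrw := hrl.infix hinf
  obtain ⟨hc1, -, hc3⟩ := List.isChain_append.1 hcw
  obtain ⟨hr1, -, hr3⟩ := List.isChain_append.1 hrw
  have hlast : (x :: (b ++ c)).getLast? = some ((x :: (b ++ c)).getLast (by simp)) :=
    List.getLast?_eq_getLast _
  refine hf (x :: (b ++ c)) ⟨⟨⟨by simp, hc1, ?_⟩, hr1, ?_⟩, fun e he => h.1 e (hmem e he)⟩
  · intro e f he hfl
    have he' : x = e := by simpa using he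
    have hg := hc3 _ (hfl) x (by simp)
    rw [← he']; exact hg
  · intro e f he hfl
    have he' : x = e := by simpa using he
    have hg := hr3 _ (hfl) x (by simp)
    rw [← he']; exact hg

lemma rwalk_singleton {H : Subgraph G} {e : G.E} (he : e ∈ H.edges) : H.RWalk [e] :=
  ⟨by intro x hx; simp at hx; subst hx; exact he,
    List.isChain_singleton _, List.isChain_singleton _⟩

lemma rwalk_snoc {H : Subgraph G} {l : List G.E} (hl : H.RWalk l) (hne : l ≠ [])
    {e : G.E} (he : e ∈ H.edges) (hie : G.init e = G.term (l.getLast hne))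
    (hnb : e ≠ G.bar (l.getLast hne)) : H.RWalk (l ++ [e]) := by
  refine ⟨?_, ?_, ?_⟩
  · intro x hx
    rcases List.mem_append.1 hx with h' | h'
    · exact hl.1 x h'
    · simp at h'; subst h'; exact he
  · refine List.IsChain.append hl.2.1 (List.isChain_singleton _) ?_
    intro a ha b hb
    rw [List.getLast?_eq_getLast hne] at ha
    simp at hb
    obtain rfl := Option.some.inj ha
    subst hb
    exact hie.symm
  · refine List.IsChain.append hl.2.2 (List.isChain_singleton _) ?_
    intro a ha b hb
    rw [List.getLast?_eq_getLast hne] at ha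
    simp at hb
    obtain rfl := Option.some.inj ha
    subst hb
    exact hnb

lemma false_of_min_degree [Fintype G.E] (H : Subgraph G) (hf : H.IsForest)
    (hne : ∃ e, e ∈ H.edges)
    (hd : ∀ f : G.E, f ∈ H.edges → ∃ e, e ∈ H.edges ∧ G.init e = G.term f ∧ e ≠ G.bar f) :
    False := by
  classical
  have key : ∀ n : ℕ, ∃ l : List G.E, H.RWalk l ∧ l.length = n + 1 := by
    intro n
    induction n with
    | zero =>
      obtain ⟨e, he⟩ := hne
      exact ⟨[e], rwalk_singleton he, rfl⟩
    | succ n ih =>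
      obtain ⟨l, hl, hlen⟩ := ih
      have hlne : l ≠ [] := by intro h; simp [h] at hlen
      have hfmem : l.getLast hlne ∈ H.edges := hl.1 _ (List.getLast_mem hlne)
      obtain ⟨e, he, hie, hnb⟩ := hd _ hfmem
      exact ⟨l ++ [e], rwalk_snoc hl hlne he hie hnb, by simp [hlen]⟩
  obtain ⟨l, hl, hlen⟩ := key (Fintype.card G.E)
  have := (hl.nodup hf).length_le_card
  omega

/-- The component of `v` in `H`. -/
def compOf (H : Subgraph G) (v : G.V) : Subgraph G where
  verts := {w | H.Reaches v w}
  edges := {e | e ∈ H.edges ∧ H.Reaches v (G.init e)}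
  bar_mem := fun e he => ⟨H.bar_mem he.1, he.2.snoc he.1 rfl⟩
  init_mem := fun _ he => he.2

lemma compOf_isCompOf {H : Subgraph G} {v : G.V} (hv : v ∈ H.verts) :
    (H.compOf v).IsCompOf H :=
  ⟨v, hv, rfl, rfl⟩

lemma forest_count [Fintype G.V] [Fintype G.E] :
    ∀ (n : ℕ) (H : Subgraph G), H.edges.ncard = n → H.IsForest →
      ∀ p q : G.V, p ∈ H.verts → q ∈ H.verts → ¬ H.Reaches p q →
        H.edges.ncard + 4 ≤ 2 * H.verts.ncard := by
  classical
  intro n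
  induction n using Nat.strong_induction_on with
  | _ n ih =>
  intro H hn hf p q hp hq hpq
  by_cases hE : H.edges = ∅
  · have hpq' : p ≠ q := fun h => hpq (h ▸ Reaches.refl p hp)
    have h2 : ({p, q} : Set G.V) ⊆ H.verts := by rintro x (rfl | rfl) <;> assumption
    have hle := Set.ncard_le_ncard h2 (Set.toFinite _)
    rw [Set.ncard_pair hpq'] at hle
    rw [hE]
    simp only [Set.ncard_empty]
    omega
  · obtain ⟨e₀, he₀⟩ := Set.nonempty_iff_ne_empty.2 hE
    set S : Set ℕ := {k | ∃ l : List G.E, H.RWalk l ∧ l ≠ [] ∧ l.length = k} with hS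
    have hSne : S.Nonempty := ⟨1, [e₀], rwalk_singleton he₀, by simp, rfl⟩
    have hSbdd : BddAbove S := by
      refine ⟨Fintype.card G.E, ?_⟩
      rintro k ⟨l, hl, -, rfl⟩
      exact (hl.nodup hf).length_le_card
    obtain ⟨l, hl, hlne, hlen⟩ := Nat.sSup_mem hSne hSbdd
    set f := l.getLast hlne with hfdef
    have hfmem : f ∈ H.edges := hl.1 _ (List.getLast_mem hlne)
    set v := G.term f with hv
    have hleaf : ∀ e, e ∈ H.edges → G.init e = v → e = G.bar f := by
      intro e he hie
      by_contra hnb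
      have hmem : l.length + 1 ∈ S :=
        ⟨l ++ [e], rwalk_snoc hl hlne he hie hnb, by simp, by simp⟩
      have := le_csSup hSbdd hmem
      omega
    have hvmem : v ∈ H.verts := term_mem hfmem
    have hbf : G.bar f ∈ H.edges := H.bar_mem hfmem
    have hfne : f ≠ G.bar f := fun h => G.bar_ne f h.symm
    have huv : G.init f ≠ v := by
      intro h
      refine hf [f] ⟨⟨⟨by simp, List.isChain_singleton _, ?_⟩, List.isChain_singleton _, ?_⟩,
        by intro x hx; simp at hx; subst hx; exact hfmem⟩
      · intro e g he hg
        simp at he hg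
        subst he; subst hg
        rw [hv] at h
        exact h.symm
      · intro e g he hg
        simp at he hg
        subst he; subst hg
        exact hfne
    set H' : Subgraph G :=
      { verts := H.verts \ {v}
        edges := H.edges \ {f, G.bar f}
        bar_mem := by
          rintro e ⟨he, hne2⟩
          refine ⟨H.bar_mem he, ?_⟩
          simp only [Set.mem_insert_iff, Set.mem_singleton_iff] at hne2 ⊢
          push_neg at hne2 ⊢
          refine ⟨fun h => hne2.2 ?_, fun h => hne2.1 ?_⟩
          · rw [← G.bar_bar e, h]
          · have := congrArg G.bar h
            rwa [G.bar_bar, G.bar_bar] at this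
        init_mem := by
          rintro e ⟨he, hne2⟩
          refine ⟨H.init_mem he, ?_⟩
          simp only [Set.mem_singleton_iff]
          intro hiv
          exact hne2 (by simp [hleaf e he hiv])
      } with hH'
    have hf' : H'.IsForest := by
      intro m hm
      exact hf m ⟨hm.1, fun e he => (hm.2 e he).1⟩
    have hvsub : H'.verts ⊆ H.verts := Set.diff_subset
    have hesub : H'.edges ⊆ H.edges := Set.diff_subset
    have hur : H.Reaches (G.init f) v := Reaches.step f hfmem (Reaches.refl _ hvmem)
    have hufmem : G.init f ∈ H.verts := H.init_mem hfmem
    -- replacement function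
    have hrep : ∀ x : G.V, x ∈ H.verts → ∃ y, y ∈ H'.verts ∧ H.Reaches x y := by
      intro x hx
      by_cases hxv : x = v
      · exact ⟨G.init f, ⟨hufmem, huv⟩, hxv ▸ hur.symm⟩
      · exact ⟨x, ⟨hx, hxv⟩, Reaches.refl x hx⟩
    obtain ⟨p', hp', hpp'⟩ := hrep p hp
    obtain ⟨q', hq', hqq'⟩ := hrep q hq
    have hpq' : ¬ H'.Reaches p' q' := by
      intro h
      exact hpq (hpp'.trans ((h.mono hvsub hesub).trans hqq'.symm))
    have hpairsub : ({f, G.bar f} : Set G.E) ⊆ H.edges := by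
      rintro x (rfl | rfl)
      · exact hfmem
      · exact hbf
    have hecard : H'.edges.ncard = H.edges.ncard - 2 := by
      have : H'.edges = H.edges \ {f, G.bar f} := rfl
      rw [this, Set.ncard_diff hpairsub (Set.toFinite _), Set.ncard_pair hfne]
    have hvcard : H'.verts.ncard = H.verts.ncard - 1 := by
      have : H'.verts = H.verts \ {v} := rfl
      rw [this, Set.ncard_diff_singleton_of_mem hvmem]
    have h2le : 2 ≤ H.edges.ncard := by
      have := Set.ncard_le_ncard hpairsub (Set.toFinite _)
      rwa [Set.ncard_pair hfne] at this
    have h1le : 1 ≤ H.verts.ncard := by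
      have : ({v} : Set G.V) ⊆ H.verts := by rintro x rfl; exact hvmem
      have := Set.ncard_le_ncard this (Set.toFinite _)
      rwa [Set.ncard_singleton] at this
    have hlt : H'.edges.ncard < n := by omega
    have := ih _ hlt H' rfl hf' p' q' hp' hq' hpq'
    omega

end Subgraph

end SGraph

end Aux

/-- Let `G` be a finite nonempty zero/one-weighted graph in which
every vertex has degree at least 2 (degree = number of darts starting at the
vertex, so a loop contributes 2). If the weight-0 subgraph `Λ₀` is a forest and
every weight-1 edge has its endpoints in distinct components of `Λ₀`, then
`Λ₀` has at least two connected components; in particular `χ(Λ₀) ≥ 2`. -/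
theorem zero_graph_has_two_components
    (G : SGraph) [Fintype G.V] [Fintype G.E] [Nonempty G.V]
    (ω : G.E → ℕ) (h01 : ∀ e, ω e = 0 ∨ ω e = 1)
    (hbar : ∀ e, ω (G.bar e) = ω e)
    (hdeg : ∀ v : G.V, 2 ≤ {e : G.E | G.init e = v}.ncard)
    (hforest : (G.full.zeroSub ω hbar).IsForest)
    (hone : ∀ e : G.E, ω e = 1 →
      ∀ C : SGraph.Subgraph G, C.IsCompOf (G.full.zeroSub ω hbar) →
        G.init e ∈ C.verts → G.term e ∉ C.verts) :
    (∃ C D : SGraph.Subgraph G, C.IsCompOf (G.full.zeroSub ω hbar) ∧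
        D.IsCompOf (G.full.zeroSub ω hbar) ∧ C.verts ≠ D.verts) ∧
      2 ≤ (G.full.zeroSub ω hbar).eulerChar := by
  classical
  set H := G.full.zeroSub ω hbar with hHdef
  have hvuniv : ∀ w : G.V, w ∈ H.verts := fun w => Set.mem_univ w
  have hex : ∃ p q : G.V, ¬ H.Reaches p q := by
    by_contra hc
    push_neg at hc
    have hall : ∀ e, ω e = 0 := by
      intro e
      rcases h01 e with h | h
      · exact h
      · exact absurd (hc (G.init e) (G.term e))
          (hone e h (H.compOf (G.init e)) (SGraph.Subgraph.compOf_isCompOf (hvuniv _))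
            (SGraph.Subgraph.Reaches.refl _ (hvuniv _)))
    have hmemE : ∀ e : G.E, e ∈ H.edges := fun e => ⟨Set.mem_univ e, hall e⟩
    obtain ⟨v₀⟩ := (inferInstance : Nonempty G.V)
    have hdartne : ∀ v : G.V, ∃ e : G.E, G.init e = v := by
      intro v
      have h2 := hdeg v
      rcases Set.eq_empty_or_nonempty {e : G.E | G.init e = v} with he | he
      · rw [he, Set.ncard_empty] at h2; omega
      · obtain ⟨e, he⟩ := he
        exact ⟨e, he⟩
    refine SGraph.Subgraph.false_of_min_degree H hforest ?_ ?_
    · obtain ⟨e, -⟩ := hdartne v₀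
      exact ⟨e, hmemE e⟩
    · intro f hfm
      have h2 := hdeg (G.term f)
      by_contra hno
      push_neg at hno
      have hsub : {e : G.E | G.init e = G.term f} ⊆ {G.bar f} := by
        intro e he
        simp only [Set.mem_singleton_iff]
        by_contra hne
        exact hne (hno e (hmemE e) he)
      have := Set.ncard_le_ncard hsub (Set.toFinite _)
      rw [Set.ncard_singleton] at this
      omega
  obtain ⟨p, q, hpq⟩ := hex
  constructor
  · refine ⟨H.compOf p, H.compOf q, SGraph.Subgraph.compOf_isCompOf (hvuniv p),
      SGraph.Subgraph.compOf_isCompOf (hvuniv q), ?_⟩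
    intro h
    have hpmem : p ∈ (H.compOf p).verts := SGraph.Subgraph.Reaches.refl p (hvuniv p)
    rw [h] at hpmem
    exact hpq (SGraph.Subgraph.Reaches.symm hpmem)
  · have hcount := SGraph.Subgraph.forest_count H.edges.ncard H rfl hforest p q
      (hvuniv p) (hvuniv q) hpq
    show (2 : ℤ) ≤ (H.verts.ncard : ℤ) - ((H.edges.ncard / 2 : ℕ) : ℤ)
    omega
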